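/- For every τ ∈ {0,1}^ℕ and every finite word w = w_0 w_1 ⋯ w_{ℓ−1} over {1,3}, the unique S-invariant probability measure μ_τ on X_τ satisfies μ_τ([w⃖]) = μ_τ([w]), where w⃖ = w_{ℓ−1} ⋯ w_1 w_0 is the reversal of w. -/

import Mathlib

open MeasureTheory Filter Topology
open scoped ENNReal

attribute [local instance] Classical.propDecidable

noncomputable section

/-- The shift map on bi-infinite sequences: `(S x) n = x (n+1)`. -/
def shift {α : Type*} (x : ℤ → α) : ℤ → α := fun n => x (n + 1)

/-- Shift by an arbitrary integer amount `m`. -/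
def shiftZ {α : Type*} (m : ℤ) (x : ℤ → α) : ℤ → α := fun n => x (n + m)

/-- A run structure on a bi-infinite sequence `x`: `t k` is the starting index of the
`k`-th maximal mono-symbol block of `x`, indexed so that block `0` contains position `0`. -/
structure RunStructure (x : ℤ → ℕ) where
  t : ℤ → ℤ
  mono : StrictMono t
  start_nonpos : t 0 ≤ 0
  start_pos : 0 < t 1
  const : ∀ k i : ℤ, t k ≤ i → i < t (k + 1) → x i = x (t k)
  alt : ∀ k : ℤ, x (t (k + 1)) ≠ x (t k)

/-- `d` is the run-length derivative of `x`: `d k` is the length of the `k`-th run. -/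
def IsDelta (x d : ℤ → ℕ) : Prop :=
  ∃ r : RunStructure x, ∀ k : ℤ, (d k : ℤ) = r.t (k + 1) - r.t k

/-- The run-length derivative operator `Δ` (junk value when no derivative exists). -/
def delta (x : ℤ → ℕ) : ℤ → ℕ :=
  if h : ∃ d, IsDelta x d then h.choose else fun _ => 0

/-- A bi-infinite sequence is smooth over `{1,3}` if all its iterated derivatives exist
and take values in `{1,3}`. -/
def SmoothSeq (x : ℤ → ℕ) : Prop :=
  ∀ k : ℕ, ∀ n : ℤ, delta^[k] x n = 1 ∨ delta^[k] x n = 3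

/-- The set `X` of bi-infinite smooth sequences over `{1,3}`. -/
def SmoothX : Set (ℤ → ℕ) := {x | SmoothSeq x}

/-- The recoding alphabet: `A = 1`, `B = 3`, `C = 111`, `D = 333`. -/
inductive ABCD : Type
  | A | B | C | D
deriving DecidableEq

instance : TopologicalSpace ABCD := ⊥
instance : DiscreteTopology ABCD := ⟨rfl⟩
instance : MeasurableSpace ABCD := ⊤

open ABCD

/-- The symbol (1 or 3) of the run encoded by a letter. -/
def sval : ABCD → ℕ
  | A => 1
  | B => 3
  | C => 1
  | D => 3

/-- The length (1 or 3) of the run encoded by a letter; this is also the value of `Δx`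
at the corresponding position. -/
def lval : ABCD → ℕ
  | A => 1
  | B => 1
  | C => 3
  | D => 3

/-- `y` is the recoding of `x`: the letter `y k` encodes the `k`-th run of `x`
(its symbol and its length). -/
def IsRecoding (x : ℤ → ℕ) (y : ℤ → ABCD) : Prop :=
  ∃ r : RunStructure x, ∀ k : ℤ,
    x (r.t k) = sval (y k) ∧ r.t (k + 1) - r.t k = (lval (y k) : ℤ)

/-- The recoding map `rec` (junk value when no recoding exists). -/
def recode (x : ℤ → ℕ) : ℤ → ABCD :=
  if h : ∃ y, IsRecoding x y then h.choose else fun _ => A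

/-- The set `Y = rec(X)` of recodings of smooth sequences. -/
def SmoothY : Set (ℤ → ABCD) := recode '' SmoothX

/-- The derivative operator induced on recodings: since `(Δx) i = lval (rec x i)`,
we have `Δ(rec x) = rec (Δ x) = recode (lval ∘ rec x)`. -/
def deltaY (y : ℤ → ABCD) : ℤ → ABCD := recode fun i => (lval (y i) : ℕ)

/-- `y` is well-aligned: the elementary block of `y` containing coordinate `0` starts
at position `0` (elementary blocks of `y` are exactly the runs of `Δx`, and
`(Δx) i = lval (y i)`). -/
def WellAligned (y : ℤ → ABCD) : Prop := lval (y (-1)) ≠ lval (y 0)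

/-- `B_Y^L`: the set of `y ∈ Y` such that `y, Δy, ..., Δ^{L-1} y` are all well-aligned. -/
def BY (L : ℕ) : Set (ℤ → ABCD) :=
  {y | y ∈ SmoothY ∧ ∀ l < L, WellAligned (deltaY^[l] y)}

/-- `Σ_y^L(n) = #{k ∈ [1,n] : S^k y ∈ B_Y^L}`. -/
def SigY (L : ℕ) (y : ℤ → ABCD) (n : ℕ) : ℕ :=
  ((Finset.Icc 1 n).filter fun k => shift^[k] y ∈ BY L).card

/-- `y` contains an elementary block in `{ABA, DCD}` (for `y ∈ Y`, any such factor is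
automatically an elementary block). -/
def HasType0 (y : ℤ → ABCD) : Prop :=
  ∃ i : ℤ, (y i = A ∧ y (i + 1) = B ∧ y (i + 2) = A) ∨
           (y i = D ∧ y (i + 1) = C ∧ y (i + 2) = D)

/-- `y` contains an elementary block in `{BAB, CDC}`. -/
def HasType1 (y : ℤ → ABCD) : Prop :=
  ∃ i : ℤ, (y i = B ∧ y (i + 1) = A ∧ y (i + 2) = B) ∨
           (y i = C ∧ y (i + 1) = D ∧ y (i + 2) = C)

/-- The type of a recoded sequence: `false` = type 0, `true` = type 1. -/
def typeOf (y : ℤ → ABCD) : Bool := decide (HasType1 y)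

/-- The sequence of types of the successive derivatives of a smooth sequence `x`. -/
def TypesX (x : ℤ → ℕ) : ℕ → Bool := fun n => typeOf (recode (delta^[n] x))

/-- The sequence of types of the successive derivatives of a recoded sequence `y`. -/
def TypesY (y : ℤ → ABCD) : ℕ → Bool := fun n => typeOf (deltaY^[n] y)

/-- `X_τ`: smooth bi-infinite sequences whose type sequence is exactly `τ`. -/
def Xset (τ : ℕ → Bool) : Set (ℤ → ℕ) := {x ∈ SmoothX | TypesX x = τ}

/-- `Y_τ = rec(X_τ)`. -/
def Yset (τ : ℕ → Bool) : Set (ℤ → ABCD) := recode '' Xset τ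

/-- A sequence over `{A,B,C,D}` is alternating: no two consecutive symbols in `{A,C}`
and no two consecutive symbols in `{B,D}`. -/
def Alternating (y : ℤ → ABCD) : Prop := ∀ n : ℤ, sval (y n) ≠ sval (y (n + 1))

/-- The substitutions `φ₀` and `φ₁` on letters. -/
def phiW : Bool → ABCD → List ABCD
  | false, A => [A]
  | false, B => [D]
  | false, C => [A, B, A]
  | false, D => [D, C, D]
  | true, A => [B]
  | true, B => [C]
  | true, C => [B, A, B]
  | true, D => [C, D, C]

/-- `z` is the image of the bi-infinite sequence `y` under the substitution `φ_t`, with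
the convention that the image of the letter at position `0` starts at position `0`. -/
def IsSubst (t : Bool) (y z : ℤ → ABCD) : Prop :=
  ∃ u : ℤ → ℤ, u 0 = 0 ∧
    (∀ k : ℤ, u (k + 1) = u k + (phiW t (y k)).length) ∧
    (∀ k : ℤ, ∀ j : Fin (phiW t (y k)).length, z (u k + (j : ℕ)) = (phiW t (y k)).get j)

/-- The substitution `φ_t` on bi-infinite sequences. -/
def substF (t : Bool) (y : ℤ → ABCD) : ℤ → ABCD :=
  if h : ∃ z, IsSubst t y z then h.choose else y

/-- The composition `φ_{τ₀} ∘ φ_{τ₁} ∘ ⋯ ∘ φ_{τ_{L-1}}`. -/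
def substComp (τ : ℕ → Bool) : ℕ → (ℤ → ABCD) → (ℤ → ABCD)
  | 0 => id
  | L + 1 => substF (τ 0) ∘ substComp (fun n => τ (n + 1)) L

/-- The homographies `h₀` and `h₁`. -/
def hmap : Bool → ℝ × ℝ → ℝ × ℝ
  | false, p => ((1 - p.1) / (3 - 2 * (p.1 + p.2)), (1 / 2 - p.1) / (3 - 2 * (p.1 + p.2)))
  | true, p => ((1 / 2 - p.1) / (3 - 2 * (p.1 + p.2)), (1 - p.1) / (3 - 2 * (p.1 + p.2)))

/-- The square `K = [0,1/2] × [0,1/2]`. -/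
def Ksq : Set (ℝ × ℝ) := Set.Icc (0 : ℝ) (1 / 2) ×ˢ Set.Icc (0 : ℝ) (1 / 2)

/-- The domain `E = {(a,b) ∈ K : a + b ≤ 3/4}`. -/
def Eset : Set (ℝ × ℝ) := {p ∈ Ksq | p.1 + p.2 ≤ 3 / 4}

/-- The composition `h_{t₀} ∘ h_{t₁} ∘ ⋯ ∘ h_{t_L}`. -/
def hComp (t : ℕ → Bool) : ℕ → (ℝ × ℝ → ℝ × ℝ)
  | 0 => hmap (t 0)
  | L + 1 => hComp t L ∘ hmap (t (L + 1))

/-- The point `(a(t), b(t))`, unique point of `⋂_L (h_{t₀} ∘ ⋯ ∘ h_{t_L})(E)`. -/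
def abPoint (t : ℕ → Bool) : ℝ × ℝ :=
  if h : ∃ p : ℝ × ℝ, (⋂ L : ℕ, hComp t L '' Eset) = {p} then h.choose else 0

/-- The number of occurrences of the letter `s` among positions `1, ..., m` of `z`. -/
def letterCount (s : ABCD) (z : ℤ → ABCD) (m : ℕ) : ℕ :=
  ((Finset.Icc 1 m).filter fun k => z (k : ℤ) = s).card

/-- `w` occurs as a factor of `y` at position `i`. -/
def IsFactorAt (w : List ABCD) (y : ℤ → ABCD) (i : ℤ) : Prop :=
  ∀ j : Fin w.length, y (i + (j : ℕ)) = w.get j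

/-- The cylinder set `[w]` in `{1,3}^ℤ`. -/
def cylX (w : List ℕ) : Set (ℤ → ℕ) :=
  {x | ∀ j : Fin w.length, x ((j : ℕ) : ℤ) = w.get j}

/-- The cylinder set `[w]` in `{A,B,C,D}^ℤ`. -/
def cylY (w : List ABCD) : Set (ℤ → ABCD) :=
  {y | ∀ j : Fin w.length, y ((j : ℕ) : ℤ) = w.get j}

/-- The number of occurrences of the finite word `w` in the prefix `x₀ ⋯ x_{n-1}`. -/
def occCount (x : ℤ → ℕ) (w : List ℕ) (n : ℕ) : ℕ :=
  ((Finset.range n).filter fun i =>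
    i + w.length ≤ n ∧ ∀ j : Fin w.length, x (((i + (j : ℕ) : ℕ)) : ℤ) = w.get j).card

/-- A subshift `Z` is minimal if it contains no nonempty proper closed shift-invariant
subset. -/
def ShiftMinimal {α : Type*} [TopologicalSpace α] (Z : Set (ℤ → α)) : Prop :=
  ∀ W : Set (ℤ → α), W ⊆ Z → W.Nonempty → IsClosed W → shift '' W = W → W = Z

/-- flip on `{1,3}`. -/
def flp (v : ℕ) : ℕ := 4 - v

lemma flp_flp {v : ℕ} (h : v = 1 ∨ v = 3) : flp (flp v) = v := by
  rcases h with h | h <;> simp [flp, h]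

lemma flp_mem {v : ℕ} (h : v = 1 ∨ v = 3) : flp v = 1 ∨ flp v = 3 := by
  rcases h with h | h <;> simp [flp, h]

lemma eq_flp_of_ne {v u : ℕ} (hv : v = 1 ∨ v = 3) (hu : u = 1 ∨ u = 3)
    (hne : u ≠ v) : u = flp v := by
  rcases hv with h | h <;> rcases hu with h' | h' <;> simp_all [flp]

section runstr

variable {x : ℤ → ℕ} (r : RunStructure x)

lemma RunStructure.add_le (k : ℤ) (n : ℕ) : r.t k + n ≤ r.t (k + n) := by
  induction n with
  | zero => simp
  | succ n ih =>
    have e : k + ((n + 1 : ℕ) : ℤ) = (k + n) + 1 := by push_cast; ring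
    have h := r.mono (show (k + (n : ℤ)) < (k + n) + 1 by omega)
    rw [e]
    push_cast at ih ⊢
    omega

lemma RunStructure.sub_le (k : ℤ) (n : ℕ) : r.t (k - n) + n ≤ r.t k := by
  have := r.add_le (k - n) n
  simpa using this

/-- Every position is covered by some run. -/
lemma RunStructure.cover (p : ℤ) : ∃ k, r.t k ≤ p ∧ p < r.t (k + 1) := by
  have hbdd : ∀ z : ℤ, r.t z ≤ p → z ≤ max 0 (p - r.t 0) := by
    intro z hz
    rcases le_or_gt z 0 with h | h
    · exact le_trans h (le_max_left _ _)
    · have h2 : r.t 0 + z.toNat ≤ r.t (0 + z.toNat) := r.add_le 0 z.toNat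
      have hz' : (0 : ℤ) + z.toNat = z := by omega
      rw [hz'] at h2
      have : z ≤ p - r.t 0 := by omega
      exact le_trans this (le_max_right _ _)
  have hne : ∃ z : ℤ, r.t z ≤ p := by
    refine ⟨0 - ((r.t 0 - p).toNat : ℤ), ?_⟩
    have := r.sub_le 0 (r.t 0 - p).toNat
    omega
  obtain ⟨k, hk, hgreat⟩ := Int.exists_greatest_of_bdd ⟨_, fun z hz => hbdd z hz⟩ hne
  refine ⟨k, hk, ?_⟩
  by_contra h
  have := hgreat (k + 1) (by omega)
  omega

lemma RunStructure.cover_unique {p k k' : ℤ} (h1 : r.t k ≤ p) (h2 : p < r.t (k + 1))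
    (h3 : r.t k' ≤ p) (h4 : p < r.t (k' + 1)) : k = k' := by
  by_contra hne
  rcases lt_or_gt_of_ne hne with h | h
  · have : r.t (k + 1) ≤ r.t k' := r.mono.le_iff_le.mpr (by omega)
    omega
  · have : r.t (k' + 1) ≤ r.t k := r.mono.le_iff_le.mpr (by omega)
    omega

end runstr

section smooth

lemma delta_iter_succ (x : ℤ → ℕ) (k : ℕ) : delta^[k + 1] x = delta (delta^[k] x) :=
  Function.iterate_succ_apply' delta k x

lemma SmoothSeq.iter {x : ℤ → ℕ} (hx : SmoothSeq x) (i : ℕ) : SmoothSeq (delta^[i] x) := by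
  intro k n
  rw [← Function.iterate_add_apply]
  exact hx (k + i) n

lemma SmoothSeq.val13 {x : ℤ → ℕ} (hx : SmoothSeq x) (n : ℤ) : x n = 1 ∨ x n = 3 := hx 0 n

/-- For a smooth sequence, `delta x` really is given by a run structure. -/
lemma SmoothSeq.exists_rs {x : ℤ → ℕ} (hx : SmoothSeq x) :
    ∃ r : RunStructure x, ∀ k : ℤ, (delta x k : ℤ) = r.t (k + 1) - r.t k := by
  have h1 : delta x 0 = 1 ∨ delta x 0 = 3 := by
    have := hx 1 0
    simpa using this
  have hex : ∃ d, IsDelta x d := by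
    by_contra hne
    rw [delta, dif_neg hne] at h1
    simp at h1
  obtain ⟨r, hr⟩ : IsDelta x (delta x) := by
    rw [delta, dif_pos hex]
    exact hex.choose_spec
  exact ⟨r, hr⟩

variable {x : ℤ → ℕ} (hx : SmoothSeq x)

/-- The chosen run structure of `delta^[i] x`. -/
def rs (i : ℕ) : RunStructure (delta^[i] x) := ((hx.iter i).exists_rs).choose

lemma rs_spec (i : ℕ) (k : ℤ) :
    (delta^[i + 1] x k : ℤ) = (rs hx i).t (k + 1) - (rs hx i).t k := by
  rw [delta_iter_succ]
  exact ((hx.iter i).exists_rs).choose_spec k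

/-- Run lengths are 1 or 3. -/
lemma rs_gap (i : ℕ) (k : ℤ) :
    (rs hx i).t (k + 1) - (rs hx i).t k = 1 ∨ (rs hx i).t (k + 1) - (rs hx i).t k = 3 := by
  have h := rs_spec hx i k
  rcases hx (i + 1) k with h1 | h1 <;> rw [h1] at h <;> [left; right] <;> omega

/-- Symbols of consecutive runs alternate via `flp`. -/
lemma rs_alt (i : ℕ) (k : ℤ) :
    delta^[i] x ((rs hx i).t (k + 1)) = flp (delta^[i] x ((rs hx i).t k)) :=
  eq_flp_of_ne ((hx.iter i).val13 _) ((hx.iter i).val13 _) ((rs hx i).alt k)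

/-- No four consecutive equal values in a smooth sequence. -/
lemma SmoothSeq.no4 {y : ℤ → ℕ} (hy : SmoothSeq y) (j : ℤ)
    (h1 : y (j + 1) = y j) (h2 : y (j + 2) = y j) (h3 : y (j + 3) = y j) : False := by
  obtain ⟨r, hr⟩ := hy.exists_rs
  obtain ⟨k, hk1, hk2⟩ := r.cover j
  have hext : j + 3 < r.t (k + 1) := by
    by_contra hcon
    push_neg at hcon
    set p := r.t (k + 1) with hp
    have hconst : y (p - 1) = y (r.t k) := r.const k (p - 1) (by omega) (by omega)
    have halt : y (r.t (k + 1)) ≠ y (r.t k) := r.alt k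
    have hyp : y p = y j := by
      have : p = j + 1 ∨ p = j + 2 ∨ p = j + 3 := by omega
      rcases this with h | h | h <;> rw [h] <;> simp_all
    have hyp1 : y (p - 1) = y j := by
      have : p - 1 = j ∨ p - 1 = j + 1 ∨ p - 1 = j + 2 := by omega
      rcases this with h | h | h <;> rw [h] <;> simp_all
    rw [← hp] at halt
    exact halt (by rw [hyp, ← hyp1, hconst])
  have hlen : (delta y k : ℤ) = r.t (k + 1) - r.t k := hr k
  have hy1 := hy 1 k
  simp only [Function.iterate_one] at hy1
  rcases hy1 with h | h <;> omega

end smooth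
section tower

variable {x : ℤ → ℕ} (hx : SmoothSeq x)

/-- Leftmost-branch position at level `i` of the level-`m` block `j`. -/
def br : ℕ → ℕ → ℤ → ℤ
  | 0, _, j => j
  | m + 1, i, j => if i = m + 1 then j else br m i ((rs hx m).t j)

lemma br_self (m : ℕ) (j : ℤ) : br hx m m j = j := by
  cases m with
  | zero => rfl
  | succ m => simp [br]

lemma br_step {i m : ℕ} (h : i ≤ m) (j : ℤ) :
    br hx (m + 1) i j = br hx m i ((rs hx m).t j) := by
  simp only [br, if_neg (by omega : ¬ i = m + 1)]

/-- Start of level-`m` block `j` in `x` (level 0) coordinates. -/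
def Tl (m : ℕ) : ℤ → ℤ := br hx m 0

lemma Tl_step (m : ℕ) (j : ℤ) : Tl hx (m + 1) j = Tl hx m ((rs hx m).t j) :=
  br_step hx (Nat.zero_le m) j

lemma br_mono : ∀ m i, i ≤ m → StrictMono (fun j => br hx m i j) := by
  intro m
  induction m with
  | zero =>
    intro i hi
    interval_cases i
    exact fun a b h => by simpa [br] using h
  | succ m ih =>
    intro i hi
    rcases Nat.eq_or_lt_of_le hi with h | h
    · subst h
      exact fun a b h => by simpa [br_self] using h
    · have h' : i ≤ m := by omega
      have : (fun j => br hx (m + 1) i j) = (fun j => br hx m i j) ∘ (rs hx m).t := by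
        funext j
        simp [br_step hx h']
      rw [this]
      exact (ih i h').comp (rs hx m).mono

lemma Tl_mono (m : ℕ) : StrictMono (Tl hx m) := br_mono hx m 0 (Nat.zero_le m)

lemma odd_tele {g : ℤ → ℤ} (hg : ∀ j, Odd (g (j + 1) - g j)) (p : ℤ) (s : ℕ) :
    (g (p + s) - g p) % 2 = (s : ℤ) % 2 := by
  induction s with
  | zero => simp
  | succ s ih =>
    have h := hg (p + s)
    rw [Int.odd_iff] at h
    have e : (p + ((s + 1 : ℕ) : ℤ)) = (p + s) + 1 := by push_cast; ring
    rw [e]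
    push_cast
    omega

lemma flp_tele {g : ℤ → ℕ} (hg : ∀ j, g (j + 1) = flp (g j)) (hv : ∀ j, g j = 1 ∨ g j = 3)
    (p : ℤ) : ∀ s : ℕ, Odd s → g (p + s) = flp (g p) := by
  have key : ∀ s : ℕ, (s % 2 = 1 → g (p + s) = flp (g p)) ∧ (s % 2 = 0 → g (p + s) = g p) := by
    intro s
    induction s with
    | zero => simp
    | succ s ih =>
      have e : (p + ((s + 1 : ℕ) : ℤ)) = (p + s) + 1 := by push_cast; ring
      constructor <;> intro hs <;> rw [e, hg (p + s)]
      · rw [ih.2 (by omega)]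
      · rw [ih.1 (by omega), flp_flp (hv p)]
  intro s hs
  exact (key s).1 (Nat.odd_iff.mp hs)

/-- Gaps of the leftmost-branch maps are odd. -/
lemma br_gap_odd : ∀ m i, i ≤ m → ∀ j, Odd (br hx m i (j + 1) - br hx m i j) := by
  intro m
  induction m with
  | zero =>
    intro i hi j
    interval_cases i
    simp [br]
  | succ m ih =>
    intro i hi j
    rcases Nat.eq_or_lt_of_le hi with h | h
    · subst h
      simp [br_self]
    · have h' : i ≤ m := by omega
      rw [br_step hx h', br_step hx h']
      have hgap := rs_gap hx m j
      have hodd : ∀ p, Odd (br hx m i (p + 1) - br hx m i p) := ih i h'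
      rcases hgap with hg | hg
      · have e : (rs hx m).t (j + 1) = (rs hx m).t j + (1 : ℕ) := by push_cast; omega
        rw [e]
        rw [Int.odd_iff]
        have := odd_tele (g := fun p => br hx m i p) hodd ((rs hx m).t j) 1
        simpa using this
      · have e : (rs hx m).t (j + 1) = (rs hx m).t j + (3 : ℕ) := by push_cast; omega
        rw [e]
        rw [Int.odd_iff]
        have := odd_tele (g := fun p => br hx m i p) hodd ((rs hx m).t j) 3
        rw [this]
        decide

/-- Below the top level, the leftmost-branch value flips at each step. -/
lemma br_flip : ∀ m i, i < m → ∀ j,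
    delta^[i] x (br hx m i (j + 1)) = flp (delta^[i] x (br hx m i j)) := by
  intro m
  induction m with
  | zero => omega
  | succ m ih =>
    intro i hi j
    have h' : i ≤ m := by omega
    rw [br_step hx h', br_step hx h']
    rcases Nat.eq_or_lt_of_le h' with h | h
    · subst h
      rw [br_self, br_self]
      exact rs_alt hx i j
    · have hflip : ∀ p, delta^[i] x (br hx m i (p + 1)) = flp (delta^[i] x (br hx m i p)) :=
        ih i h
      have hval : ∀ p, delta^[i] x (br hx m i p) = 1 ∨ delta^[i] x (br hx m i p) = 3 :=
        fun p => (hx.iter i).val13 _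
      have hgap := rs_gap hx m j
      rcases hgap with hg | hg
      · have e : (rs hx m).t (j + 1) = (rs hx m).t j + (1 : ℕ) := by push_cast; omega
        rw [e]
        exact flp_tele (g := fun p => delta^[i] x (br hx m i p)) hflip hval _ 1 (by decide)
      · have e : (rs hx m).t (j + 1) = (rs hx m).t j + (3 : ℕ) := by push_cast; omega
        rw [e]
        exact flp_tele (g := fun p => delta^[i] x (br hx m i p)) hflip hval _ 3 (by decide)

/-- Equality of the determining data of two blocks at level `m`. -/
def DataEq (m : ℕ) (j j' : ℤ) : Prop :=
  ∀ i, i ≤ m → delta^[i] x (br hx m i j) = delta^[i] x (br hx m i j')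

lemma dataEq_child0 {m : ℕ} {j j' : ℤ} (h : DataEq hx (m + 1) j j') :
    DataEq hx m ((rs hx m).t j) ((rs hx m).t j') := by
  intro i hi
  have := h i (by omega)
  rwa [br_step hx hi, br_step hx hi] at this

lemma dataEq_succ {m : ℕ} {c c' : ℤ} (h : DataEq hx m c c')
    (hm : delta^[m] x (c + 1) = delta^[m] x c)
    (hm' : delta^[m] x (c' + 1) = delta^[m] x c') :
    DataEq hx m (c + 1) (c' + 1) := by
  intro i hi
  rcases Nat.eq_or_lt_of_le hi with he | hlt
  · subst he
    rw [br_self, br_self, hm, hm']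
    have := h i le_rfl
    rwa [br_self, br_self] at this
  · rw [br_flip hx m i hlt, br_flip hx m i hlt, h i hi]

end tower
section detpal

variable {x : ℤ → ℕ} (hx : SmoothSeq x)

/-- Blocks with equal data carry equal words (and have equal lengths). -/
lemma det : ∀ m : ℕ, ∀ j j' : ℤ, DataEq hx m j j' →
    (Tl hx m (j + 1) - Tl hx m j = Tl hx m (j' + 1) - Tl hx m j') ∧
    (∀ d : ℤ, 0 ≤ d → d < Tl hx m (j + 1) - Tl hx m j →
      x (Tl hx m j + d) = x (Tl hx m j' + d)) := by
  intro m
  induction m with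
  | zero =>
    intro j j' h
    have hTl : ∀ p : ℤ, Tl hx 0 p = p := fun p => rfl
    refine ⟨by rw [hTl, hTl, hTl, hTl]; ring, ?_⟩
    intro d hd0 hd1
    rw [hTl, hTl] at hd1 ⊢
    have hd : d = 0 := by omega
    subst hd
    have := h 0 (le_refl 0)
    simpa [br] using this
  | succ m ihm =>
    intro j j' h
    have hvv : delta^[m + 1] x j = delta^[m + 1] x j' := by
      have := h (m + 1) le_rfl
      rwa [br_self, br_self] at this
    set v : ℕ := delta^[m + 1] x j with hv
    have hspec : (v : ℤ) = (rs hx m).t (j + 1) - (rs hx m).t j := rs_spec hx m j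
    have hspec' : (v : ℤ) = (rs hx m).t (j' + 1) - (rs hx m).t j' := by
      rw [hvv]; exact rs_spec hx m j'
    -- children have equal data
    have hchild : ∀ a : ℕ, a < v →
        DataEq hx m ((rs hx m).t j + a) ((rs hx m).t j' + a) := by
      intro a
      induction a with
      | zero => intro _; simpa using dataEq_child0 hx h
      | succ a ih =>
        intro ha
        have hc := ih (by omega)
        have e : ((rs hx m).t j + ((a + 1 : ℕ) : ℤ)) = ((rs hx m).t j + (a : ℕ)) + 1 := by
          push_cast; ring
        have e' : ((rs hx m).t j' + ((a + 1 : ℕ) : ℤ)) = ((rs hx m).t j' + (a : ℕ)) + 1 := by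
          push_cast; ring
        rw [e, e']
        refine dataEq_succ hx hc ?_ ?_
        · have c1 : delta^[m] x ((rs hx m).t j + (a : ℕ) + 1) = delta^[m] x ((rs hx m).t j) :=
            (rs hx m).const j _ (by omega) (by omega)
          have c2 : delta^[m] x ((rs hx m).t j + (a : ℕ)) = delta^[m] x ((rs hx m).t j) :=
            (rs hx m).const j _ (by omega) (by omega)
          rw [c1, c2]
        · have c1 : delta^[m] x ((rs hx m).t j' + (a : ℕ) + 1) = delta^[m] x ((rs hx m).t j') :=
            (rs hx m).const j' _ (by omega) (by omega)
          have c2 : delta^[m] x ((rs hx m).t j' + (a : ℕ)) = delta^[m] x ((rs hx m).t j') :=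
            (rs hx m).const j' _ (by omega) (by omega)
          rw [c1, c2]
    -- assemble children words
    have hassem : ∀ a : ℕ, a ≤ v →
        (Tl hx m ((rs hx m).t j + a) - Tl hx m ((rs hx m).t j)
          = Tl hx m ((rs hx m).t j' + a) - Tl hx m ((rs hx m).t j')) ∧
        (∀ d : ℤ, 0 ≤ d → d < Tl hx m ((rs hx m).t j + a) - Tl hx m ((rs hx m).t j) →
          x (Tl hx m ((rs hx m).t j) + d) = x (Tl hx m ((rs hx m).t j') + d)) := by
      intro a
      induction a with
      | zero =>
        intro _
        constructor
        · norm_num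
        · intro d hd0 hd1
          norm_num at hd1
          omega
      | succ a ih =>
        intro ha
        obtain ⟨ihlen, ihword⟩ := ih (by omega)
        obtain ⟨clen, cword⟩ := ihm ((rs hx m).t j + a) ((rs hx m).t j' + a) (hchild a (by omega))
        have e : ((rs hx m).t j + ((a + 1 : ℕ) : ℤ)) = ((rs hx m).t j + (a : ℕ)) + 1 := by
          push_cast; ring
        have e' : ((rs hx m).t j' + ((a + 1 : ℕ) : ℤ)) = ((rs hx m).t j' + (a : ℕ)) + 1 := by
          push_cast; ring
        rw [e, e']
        constructor
        · omega
        · intro d hd0 hd1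
          rcases lt_or_ge d (Tl hx m ((rs hx m).t j + (a : ℕ)) - Tl hx m ((rs hx m).t j)) with
            hlt | hge
          · exact ihword d hd0 hlt
          · have h1 : Tl hx m ((rs hx m).t j) + d
                = Tl hx m ((rs hx m).t j + (a : ℕ))
                  + (d - (Tl hx m ((rs hx m).t j + (a : ℕ)) - Tl hx m ((rs hx m).t j))) := by
              ring
            have h2 : Tl hx m ((rs hx m).t j') + d
                = Tl hx m ((rs hx m).t j' + (a : ℕ))
                  + (d - (Tl hx m ((rs hx m).t j + (a : ℕ)) - Tl hx m ((rs hx m).t j))) := by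
              omega
            rw [h1, h2]
            exact cword _ (by omega) (by omega)
    have E1 : Tl hx (m + 1) j = Tl hx m ((rs hx m).t j) := Tl_step hx m j
    have E2 : Tl hx (m + 1) (j + 1) = Tl hx m ((rs hx m).t (j + 1)) := Tl_step hx m (j + 1)
    have E1' : Tl hx (m + 1) j' = Tl hx m ((rs hx m).t j') := Tl_step hx m j'
    have E2' : Tl hx (m + 1) (j' + 1) = Tl hx m ((rs hx m).t (j' + 1)) := Tl_step hx m (j' + 1)
    have E3 : (rs hx m).t (j + 1) = (rs hx m).t j + (v : ℕ) := by omega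
    have E3' : (rs hx m).t (j' + 1) = (rs hx m).t j' + (v : ℕ) := by omega
    obtain ⟨flen, fword⟩ := hassem v le_rfl
    constructor
    · rw [E1, E2, E1', E2', E3, E3']
      omega
    · intro d hd0 hd1
      rw [E1, E2, E3] at hd1
      rw [E1, E1']
      exact fword d hd0 hd1
end detpal
section palin

variable {x : ℤ → ℕ} (hx : SmoothSeq x)

/-- Every level-`m` block of a smooth sequence is a palindrome. -/
lemma pal : ∀ m : ℕ, ∀ j d : ℤ, 0 ≤ d → d < Tl hx m (j + 1) - Tl hx m j →
    x (Tl hx m j + d) = x (Tl hx m (j + 1) - 1 - d) := by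
  intro m
  induction m with
  | zero =>
    intro j d hd0 hd1
    have hTl : ∀ p : ℤ, Tl hx 0 p = p := fun p => rfl
    rw [hTl, hTl] at hd1
    rw [hTl, hTl]
    congr 1
    omega
  | succ m ihm =>
    intro j d hd0 hd1
    have hspec : ((delta^[m + 1] x j : ℕ) : ℤ) = (rs hx m).t (j + 1) - (rs hx m).t j :=
      rs_spec hx m j
    have hv13 := hx (m + 1) j
    have E1 : Tl hx (m + 1) j = Tl hx m ((rs hx m).t j) := Tl_step hx m j
    have E2 : Tl hx (m + 1) (j + 1) = Tl hx m ((rs hx m).t (j + 1)) := Tl_step hx m (j + 1)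
    rcases hv13 with h1 | h3
    · have E3 : (rs hx m).t (j + 1) = (rs hx m).t j + 1 := by
        rw [h1] at hspec; push_cast at hspec; omega
      rw [E1, E2, E3] at hd1 ⊢
      exact ihm _ d hd0 hd1
    · have E3 : (rs hx m).t (j + 1) = (rs hx m).t j + 1 + 1 + 1 := by
        rw [h3] at hspec; push_cast at hspec; omega
      set c := (rs hx m).t j with hc
      have hDE : DataEq hx m c (c + 1 + 1) := by
        intro i hi
        rcases Nat.eq_or_lt_of_le hi with he | hlt
        · subst he
          rw [br_self, br_self]
          have k2 : delta^[i] x (c + 1 + 1) = delta^[i] x ((rs hx i).t j) :=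
            (rs hx i).const j _ (by omega) (by omega)
          rw [k2, hc]
        · rw [show c + 1 + 1 = (c + 1) + 1 from rfl, br_flip hx m i hlt, br_flip hx m i hlt,
            flp_flp ((hx.iter i).val13 _)]
      obtain ⟨clen, cword⟩ := det hx m c (c + 1 + 1) hDE
      rw [E1, E2, E3] at hd1 ⊢
      set A0 := Tl hx m c with hA0
      set A1 := Tl hx m (c + 1) with hA1
      set A2 := Tl hx m (c + 1 + 1) with hA2
      set A3 := Tl hx m (c + 1 + 1 + 1) with hA3
      have m01 : A0 < A1 := Tl_mono hx m (by omega)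
      have m12 : A1 < A2 := Tl_mono hx m (by omega)
      have m23 : A2 < A3 := Tl_mono hx m (by omega)
      rcases lt_or_ge d (A1 - A0) with hca | h1'
      · have p1 : x (A0 + d) = x (A1 - 1 - d) := ihm c d hd0 (by omega)
        have p2 : x (A0 + (A1 - A0 - 1 - d)) = x (A2 + (A1 - A0 - 1 - d)) :=
          cword _ (by omega) (by omega)
        have e1 : A1 - 1 - d = A0 + (A1 - A0 - 1 - d) := by omega
        have e2 : A2 + (A1 - A0 - 1 - d) = A3 - 1 - d := by omega
        rw [p1, e1, p2, e2]
      rcases lt_or_ge d (A2 - A0) with hcb | h2'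
      · have p1 : x (A1 + (d - (A1 - A0))) = x (A2 - 1 - (d - (A1 - A0))) :=
          ihm (c + 1) _ (by omega) (by omega)
        have e1 : A0 + d = A1 + (d - (A1 - A0)) := by omega
        have e2 : A2 - 1 - (d - (A1 - A0)) = A3 - 1 - d := by omega
        rw [e1, p1, e2]
      · have p0 : x (A0 + (d - (A2 - A0))) = x (A2 + (d - (A2 - A0))) :=
          cword _ (by omega) (by omega)
        have p1 : x (A0 + (d - (A2 - A0))) = x (A1 - 1 - (d - (A2 - A0))) :=
          ihm c _ (by omega) (by omega)
        have e1 : A0 + d = A2 + (d - (A2 - A0)) := by omega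
        have e2 : A1 - 1 - (d - (A2 - A0)) = A3 - 1 - d := by omega
        rw [e1, ← p0, p1, e2]

end palin
section sizes

variable {x : ℤ → ℕ} (hx : SmoothSeq x)

lemma t_spread_le (m : ℕ) (p : ℤ) (s : ℕ) :
    (rs hx m).t (p + s) ≤ (rs hx m).t p + 3 * s := by
  induction s with
  | zero => simp
  | succ s ih =>
    have e : p + ((s + 1 : ℕ) : ℤ) = (p + s) + 1 := by push_cast; ring
    have g := rs_gap hx m (p + s)
    rw [e]
    push_cast at ih ⊢
    rcases g with g | g <;> omega

lemma Tl_spread_le : ∀ m : ℕ, ∀ p : ℤ, ∀ s : ℕ,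
    Tl hx m (p + s) ≤ Tl hx m p + 3 ^ m * s := by
  intro m
  induction m with
  | zero =>
    intro p s
    have hTl : ∀ q : ℤ, Tl hx 0 q = q := fun q => rfl
    rw [hTl, hTl]
    push_cast
    omega
  | succ m ihm =>
    intro p s
    rw [Tl_step, Tl_step]
    have h1 : (rs hx m).t (p + s) ≤ (rs hx m).t p + (3 * s : ℕ) := by
      have := t_spread_le hx m p s
      push_cast
      push_cast at this
      omega
    have h2 : Tl hx m ((rs hx m).t (p + s)) ≤ Tl hx m ((rs hx m).t p + (3 * s : ℕ)) :=
      (Tl_mono hx m).monotone h1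
    have h3 := ihm ((rs hx m).t p) (3 * s)
    calc Tl hx m ((rs hx m).t (p + s)) ≤ Tl hx m ((rs hx m).t p + (3 * s : ℕ)) := h2
      _ ≤ Tl hx m ((rs hx m).t p) + 3 ^ m * (3 * s) := h3
      _ = Tl hx m ((rs hx m).t p) + 3 ^ (m + 1) * s := by push_cast; ring

lemma len_le (m : ℕ) (j : ℤ) : Tl hx m (j + 1) - Tl hx m j ≤ 3 ^ m := by
  have := Tl_spread_le hx m j 1
  push_cast at this
  omega

lemma t_group (m : ℕ) (p : ℤ) : (rs hx m).t p + 6 ≤ (rs hx m).t (p + 4) := by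
  have hv : ∀ q : ℤ, ((delta^[m + 1] x q : ℕ) : ℤ) = (rs hx m).t (q + 1) - (rs hx m).t q :=
    rs_spec hx m
  have v0 := hv p
  have v1 := hv (p + 1)
  have v2 := hv (p + 2)
  have v3 := hv (p + 3)
  rw [show p + 1 + 1 = p + 2 by ring] at v1
  rw [show p + 2 + 1 = p + 3 by ring] at v2
  rw [show p + 3 + 1 = p + 4 by ring] at v3
  have h0 := hx (m + 1) p
  have h1 := hx (m + 1) (p + 1)
  have h2 := hx (m + 1) (p + 2)
  have h3 := hx (m + 1) (p + 3)
  by_cases hall : delta^[m + 1] x p = 1 ∧ delta^[m + 1] x (p + 1) = 1 ∧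
      delta^[m + 1] x (p + 2) = 1 ∧ delta^[m + 1] x (p + 3) = 1
  · exfalso
    exact (hx.iter (m + 1)).no4 p (by omega) (by omega) (by omega)
  · rcases h0 with h0 | h0 <;> rcases h1 with h1 | h1 <;> rcases h2 with h2 | h2 <;>
      rcases h3 with h3 | h3 <;> simp [h0, h1, h2, h3] at hall ⊢ <;>
      rw [h0] at v0 <;> rw [h1] at v1 <;> rw [h2] at v2 <;> rw [h3] at v3 <;>
      push_cast at v0 v1 v2 v3 <;> omega

lemma t_group_mul (m : ℕ) (p : ℤ) (s : ℕ) :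
    (rs hx m).t p + 6 * s ≤ (rs hx m).t (p + 4 * s) := by
  induction s with
  | zero => simp
  | succ s ih =>
    have e : p + 4 * ((s + 1 : ℕ) : ℤ) = (p + 4 * (s : ℤ)) + 4 := by push_cast; ring
    rw [e]
    have hg := t_group hx m (p + 4 * (s : ℤ))
    push_cast
    omega

lemma Tl_spread_ge : ∀ m : ℕ, ∀ p : ℤ, ∀ s : ℕ,
    Tl hx m p + 6 ^ m * s ≤ Tl hx m (p + 4 ^ m * s) := by
  intro m
  induction m with
  | zero =>
    intro p s
    have hTl : ∀ q : ℤ, Tl hx 0 q = q := fun q => rfl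
    rw [hTl, hTl]
    push_cast
    omega
  | succ m ihm =>
    intro p s
    rw [Tl_step, Tl_step]
    have h1 := t_group_mul hx m p (4 ^ m * s)
    push_cast at h1
    have e : p + 4 ^ (m + 1) * (s : ℤ) = p + 4 * (4 ^ m * (s : ℤ)) := by ring
    rw [e]
    have h3 : Tl hx m ((rs hx m).t p + 6 * (4 ^ m * (s : ℤ)))
        ≤ Tl hx m ((rs hx m).t (p + 4 * (4 ^ m * (s : ℤ)))) := (Tl_mono hx m).monotone h1
    have h4 := ihm ((rs hx m).t p) (6 * s)
    push_cast at h4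
    have e2 : (rs hx m).t p + 4 ^ m * (6 * (s : ℤ)) = (rs hx m).t p + 6 * (4 ^ m * (s : ℤ)) := by
      ring
    rw [e2] at h4
    have e3 : (6 : ℤ) ^ (m + 1) * s = 6 ^ m * (6 * s) := by ring
    rw [e3]
    exact le_trans h4 h3

lemma Tl_cover (m : ℕ) (p : ℤ) : ∃ k, Tl hx m k ≤ p ∧ p < Tl hx m (k + 1) := by
  induction m generalizing p with
  | zero =>
    have hTl : ∀ q : ℤ, Tl hx 0 q = q := fun q => rfl
    exact ⟨p, (hTl p).le, by rw [hTl]; omega⟩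
  | succ m ihm =>
    obtain ⟨q, hq1, hq2⟩ := ihm p
    obtain ⟨k, hk1, hk2⟩ := (rs hx m).cover q
    refine ⟨k, ?_, ?_⟩
    · rw [Tl_step]
      exact le_trans ((Tl_mono hx m).monotone hk1) hq1
    · rw [Tl_step]
      have h5 : q + 1 ≤ (rs hx m).t (k + 1) := by omega
      have h6 : Tl hx m (q + 1) ≤ Tl hx m ((rs hx m).t (k + 1)) := (Tl_mono hx m).monotone h5
      omega

lemma Tl_cover_unique (m : ℕ) {p k k' : ℤ} (h1 : Tl hx m k ≤ p) (h2 : p < Tl hx m (k + 1))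
    (h3 : Tl hx m k' ≤ p) (h4 : p < Tl hx m (k' + 1)) : k = k' := by
  by_contra hne
  rcases lt_or_gt_of_ne hne with h | h
  · have : Tl hx m (k + 1) ≤ Tl hx m k' := (Tl_mono hx m).le_iff_le.mpr (by omega)
    omega
  · have : Tl hx m (k' + 1) ≤ Tl hx m k := (Tl_mono hx m).le_iff_le.mpr (by omega)
    omega

lemma Tl_anchor (m : ℕ) : Tl hx m 0 ≤ 0 ∧ 0 < Tl hx m 1 := by
  induction m with
  | zero => exact ⟨le_refl 0, by norm_num [Tl, br]⟩
  | succ m ihm =>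
    constructor
    · rw [Tl_step]
      exact le_trans ((Tl_mono hx m).monotone (rs hx m).start_nonpos) ihm.1
    · rw [Tl_step]
      exact lt_of_lt_of_le ihm.2 ((Tl_mono hx m).monotone (by have := (rs hx m).start_pos; omega))

end sizes
section counting

/-- `u` matches in `x` at (integer) position `i`. -/
def Mtx (x : ℤ → ℕ) (u : List ℕ) (i : ℤ) : Prop :=
  ∀ j : Fin u.length, x ((j : ℕ) + i) = u.get j

/-- Number of positions in `[0,n)` where `u` matches in `x`. -/
def mcount (x : ℤ → ℕ) (u : List ℕ) (n : ℕ) : ℕ :=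
  ((Finset.range n).filter fun i : ℕ => Mtx x u (i : ℤ)).card

lemma discrep {x : ℤ → ℕ} (hx : SmoothSeq x) (w : List ℕ) (hl : w.length ≠ 0) (K n : ℕ) :
    mcount x w n ≤ mcount x w.reverse n +
      (2 * 3 ^ K + w.length + 4 ^ K * ((n + 3 ^ K) / 6 ^ K + 1) * w.length) := by
  unfold mcount
  set l := w.length with hldef
  obtain ⟨a, ha1, ha2⟩ := Tl_cover hx K 0
  obtain ⟨b, hb1, hb2⟩ := Tl_cover hx K (n : ℤ)
  have hblk : ∀ i : ℕ, ∃ k, Tl hx K k ≤ (i : ℤ) ∧ (i : ℤ) < Tl hx K (k + 1) := fun i =>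
    Tl_cover hx K i
  choose blk hblk1 hblk2 using hblk
  have hAle : Tl hx K (a + 1) ≤ 3 ^ K := by
    have := len_le hx K a
    omega
  have hBn : (n : ℤ) - Tl hx K b < 3 ^ K := by
    have := len_le hx K b
    omega
  have c3 : ((3 ^ K : ℕ) : ℤ) = (3 : ℤ) ^ K := by push_cast; ring
  have hblk_lo : ∀ i : ℕ, Tl hx K (a + 1) ≤ (i : ℤ) → a + 1 ≤ blk i := by
    intro i hi
    by_contra hcon
    push_neg at hcon
    have := (Tl_mono hx K).monotone (show blk i + 1 ≤ a + 1 by omega)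
    have := hblk2 i
    omega
  have hblk_hi : ∀ i : ℕ, (i : ℤ) < Tl hx K b → blk i + 1 ≤ b := by
    intro i hi
    by_contra hcon
    push_neg at hcon
    have := (Tl_mono hx K).monotone (show b ≤ blk i by omega)
    have := hblk1 i
    omega
  classical
  set S : Finset ℕ := (Finset.range n).filter (fun i => Mtx x w (i : ℤ)) with hS
  set Iw : Finset ℕ := (Finset.range n).filter (fun i => Mtx x w (i : ℤ) ∧
    Tl hx K (a + 1) ≤ (i : ℤ) ∧ (i : ℤ) + l ≤ Tl hx K b ∧
    (i : ℤ) + l ≤ Tl hx K (blk i + 1)) with hIw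
  set Ir : Finset ℕ := (Finset.range n).filter (fun i => Mtx x w.reverse (i : ℤ) ∧
    Tl hx K (a + 1) ≤ (i : ℤ) ∧ (i : ℤ) + l ≤ Tl hx K b ∧
    (i : ℤ) + l ≤ Tl hx K (blk i + 1)) with hIr
  set B1 : Finset ℕ := (Finset.range n).filter (fun i => (i : ℤ) < Tl hx K (a + 1)) with hB1
  set B2 : Finset ℕ := (Finset.range n).filter (fun i => Tl hx K b < (i : ℤ) + l) with hB2
  set B3 : Finset ℕ := (Finset.range n).filter (fun i => Tl hx K (a + 1) ≤ (i : ℤ) ∧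
    (i : ℤ) + l ≤ Tl hx K b ∧ Tl hx K (blk i + 1) < (i : ℤ) + l) with hB3
  -- Step A : split
  have hsplit : S ⊆ Iw ∪ (B1 ∪ B2 ∪ B3) := by
    intro i hi
    rw [hS, Finset.mem_filter] at hi
    obtain ⟨hir, him⟩ := hi
    by_cases c1 : Tl hx K (a + 1) ≤ (i : ℤ)
    · by_cases c2 : (i : ℤ) + l ≤ Tl hx K b
      · by_cases c3 : (i : ℤ) + l ≤ Tl hx K (blk i + 1)
        · exact Finset.mem_union_left _ (by rw [hIw, Finset.mem_filter]; exact ⟨hir, him, c1, c2, c3⟩)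
        · refine Finset.mem_union_right _ (Finset.mem_union_right _ ?_)
          rw [hB3, Finset.mem_filter]
          exact ⟨hir, c1, c2, by omega⟩
      · refine Finset.mem_union_right _ (Finset.mem_union_left _ (Finset.mem_union_right _ ?_))
        rw [hB2, Finset.mem_filter]
        exact ⟨hir, by omega⟩
    · refine Finset.mem_union_right _ (Finset.mem_union_left _ (Finset.mem_union_left _ ?_))
      rw [hB1, Finset.mem_filter]
      exact ⟨hir, by omega⟩
  -- Step B : B1 bound
  have hcard1 : B1.card ≤ 3 ^ K := by
    have hsub : B1 ⊆ Finset.range (Tl hx K (a + 1)).toNat := by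
      intro i hi
      rw [hB1, Finset.mem_filter] at hi
      rw [Finset.mem_range]
      omega
    calc B1.card ≤ _ := Finset.card_le_card hsub
      _ = (Tl hx K (a + 1)).toNat := Finset.card_range _
      _ ≤ 3 ^ K := by omega
  -- Step C : B2 bound
  have hcard2 : B2.card ≤ 3 ^ K + l := by
    have hsub : B2 ⊆ Finset.Ico (Tl hx K b - l + 1).toNat n := by
      intro i hi
      rw [hB2, Finset.mem_filter, Finset.mem_range] at hi
      rw [Finset.mem_Ico]
      omega
    calc B2.card ≤ _ := Finset.card_le_card hsub
      _ = n - (Tl hx K b - l + 1).toNat := Nat.card_Ico _ _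
      _ ≤ 3 ^ K + l := by omega
  -- Step D : B3 bound
  have hcard3 : B3.card ≤ (b - a).toNat * l := by
    have hinj : ∀ i ∈ B3, ∀ i' ∈ B3,
        (fun i : ℕ => ((blk i, (Tl hx K (blk i + 1) - 1 - i).toNat) : ℤ × ℕ)) i =
        (fun i : ℕ => ((blk i, (Tl hx K (blk i + 1) - 1 - i).toNat) : ℤ × ℕ)) i' → i = i' := by
      intro i hi i' hi' heq
      simp only [Prod.mk.injEq] at heq
      obtain ⟨h1, h2⟩ := heq
      have b2i := hblk2 i
      have b2i' := hblk2 i'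
      rw [h1] at h2 b2i
      have b1i := hblk1 i
      have b1i' := hblk1 i'
      rw [h1] at b1i
      omega
    have hmaps : ∀ i ∈ B3, ((blk i, (Tl hx K (blk i + 1) - 1 - i).toNat) : ℤ × ℕ) ∈
        (Finset.Icc (a + 1) b) ×ˢ (Finset.range l) := by
      intro i hi
      rw [hB3, Finset.mem_filter, Finset.mem_range] at hi
      obtain ⟨hir, hc1, hc2, hc3⟩ := hi
      rw [Finset.mem_product, Finset.mem_Icc, Finset.mem_range]
      have hlo := hblk_lo i hc1
      have hhi := hblk_hi i (by omega)
      have b1i := hblk1 i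
      have b2i := hblk2 i
      exact ⟨⟨hlo, by omega⟩, by omega⟩
    calc B3.card ≤ ((Finset.Icc (a + 1) b) ×ˢ (Finset.range l)).card :=
          Finset.card_le_card_of_injOn _ hmaps hinj
      _ = (Finset.Icc (a + 1) b).card * l := by rw [Finset.card_product, Finset.card_range]
      _ = (b + 1 - (a + 1)).toNat * l := by rw [Int.card_Icc]
      _ ≤ (b - a).toNat * l := by
          have : (b + 1 - (a + 1)).toNat ≤ (b - a).toNat := by omega
          exact Nat.mul_le_mul_right _ this
  -- Step E : reflection injection Iw → Ir
  have hcardI : Iw.card ≤ Ir.card := by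
    apply Finset.card_le_card_of_injOn
      (fun i => (Tl hx K (blk i) + Tl hx K (blk i + 1) - l - i).toNat)
    · intro i hi
      rw [Finset.mem_coe, hIw, Finset.mem_filter, Finset.mem_range] at hi
      obtain ⟨hirange, hmt, hc1, hc2, hc3⟩ := hi
      have hk1 := hblk1 i
      have hk2 := hblk2 i
      have hkb : blk i + 1 ≤ b := hblk_hi i (by omega)
      have hTk1B : Tl hx K (blk i + 1) ≤ Tl hx K b := (Tl_mono hx K).monotone hkb
      have hka := hblk_lo i hc1
      have hTka : Tl hx K (a + 1) ≤ Tl hx K (blk i) := (Tl_mono hx K).monotone hka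
      set rz : ℤ := Tl hx K (blk i) + Tl hx K (blk i + 1) - l - i with hrz
      have hrz1 : Tl hx K (blk i) ≤ rz := by omega
      have hrz2 : rz + l ≤ Tl hx K (blk i + 1) := by omega
      have hrzpos : 0 ≤ rz := by omega
      have hblkr : blk rz.toNat = blk i := by
        have u1 := hblk1 rz.toNat
        have u2 := hblk2 rz.toNat
        exact Tl_cover_unique hx K u1 u2 (by omega) (by omega)
      rw [Finset.mem_coe, hIr, Finset.mem_filter, Finset.mem_range]
      beta_reduce
      refine ⟨by omega, ?_, by omega, by omega, by rw [hblkr]; omega⟩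
      -- the reversed word matches at rz
      intro j
      have hjl : (j : ℕ) < l := by
        have := j.isLt
        simpa [hldef] using this
      have hd0a : (0 : ℤ) ≤ rz + (j : ℕ) - Tl hx K (blk i) := by omega
      have hd0b : rz + (j : ℕ) - Tl hx K (blk i) <
          Tl hx K (blk i + 1) - Tl hx K (blk i) := by omega
      have hp := pal hx K (blk i) _ hd0a hd0b
      have e1 : ((j : ℕ) : ℤ) + (rz.toNat : ℤ) =
          Tl hx K (blk i) + (rz + (j : ℕ) - Tl hx K (blk i)) := by omega
      have e2 : Tl hx K (blk i + 1) - 1 - (rz + (j : ℕ) - Tl hx K (blk i)) =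
          ((l - 1 - (j : ℕ) : ℕ) : ℤ) + i := by omega
      rw [e1, hp, e2]
      have hfin : l - 1 - (j : ℕ) < w.length := by omega
      have h5 : x (((l - 1 - (j : ℕ) : ℕ) : ℤ) + (i : ℤ)) = w.get ⟨l - 1 - (j : ℕ), hfin⟩ :=
        hmt ⟨l - 1 - (j : ℕ), hfin⟩
      rw [h5]
      rw [List.get_eq_getElem, List.get_eq_getElem, List.getElem_reverse]
    · intro i hi i' hi' heq
      simp only at heq
      rw [Finset.mem_coe, hIw, Finset.mem_filter, Finset.mem_range] at hi hi'
      obtain ⟨hirange, hmt, hc1, hc2, hc3⟩ := hi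
      obtain ⟨hirange', hmt', hc1', hc2', hc3'⟩ := hi'
      have hk1 := hblk1 i
      have hk2 := hblk2 i
      have hk1' := hblk1 i'
      have hk2' := hblk2 i'
      have hTka : Tl hx K (a + 1) ≤ Tl hx K (blk i) :=
        (Tl_mono hx K).monotone (hblk_lo i hc1)
      have hTka' : Tl hx K (a + 1) ≤ Tl hx K (blk i') :=
        (Tl_mono hx K).monotone (hblk_lo i' hc1')
      have hz : Tl hx K (blk i) + Tl hx K (blk i + 1) - l - i =
          Tl hx K (blk i') + Tl hx K (blk i' + 1) - l - i' := by omega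
      have hbb : blk i = blk i' := by
        apply Tl_cover_unique hx K (p := Tl hx K (blk i) + Tl hx K (blk i + 1) - l - i)
          (by omega) (by omega) (by rw [hz]; omega) (by rw [hz]; omega)
      rw [hbb] at hz
      omega
  -- Step F : density bound
  have hdens : (b - a).toNat ≤ 4 ^ K * ((n + 3 ^ K) / 6 ^ K + 1) := by
    set s' := (n + 3 ^ K) / 6 ^ K + 1 with hs'
    have h6pos : 0 < 6 ^ K := pow_pos (by norm_num) K
    have hdm := Nat.div_add_mod (n + 3 ^ K) (6 ^ K)
    have hmod : (n + 3 ^ K) % 6 ^ K < 6 ^ K := Nat.mod_lt _ h6pos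
    have h6 : n + 3 ^ K + 1 ≤ 6 ^ K * s' := by
      rw [hs', Nat.mul_add, Nat.mul_one]
      omega
    have hsp := Tl_spread_ge hx K a s'
    have hTa : 1 - (3 : ℤ) ^ K ≤ Tl hx K a := by
      have := len_le hx K a
      omega
    have h6' : (n : ℤ) + 3 ^ K + 1 ≤ 6 ^ K * (s' : ℤ) := by exact_mod_cast h6
    have hTgt : (n : ℤ) < Tl hx K (a + 4 ^ K * (s' : ℤ)) := by omega
    have hlt : b < a + 4 ^ K * (s' : ℤ) :=
      (Tl_mono hx K).lt_iff_lt.mp (by omega)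
    have c4 : ((4 ^ K * s' : ℕ) : ℤ) = 4 ^ K * (s' : ℤ) := by push_cast; ring
    omega
  -- Final assembly
  have hrevsub : Ir.card ≤ ((Finset.range n).filter fun i : ℕ => Mtx x w.reverse (i : ℤ)).card := by
    apply Finset.card_le_card
    intro i hi
    rw [hIr, Finset.mem_filter] at hi
    rw [Finset.mem_filter]
    exact ⟨hi.1, hi.2.1⟩
  have t1 : S.card ≤ Iw.card + (B1.card + B2.card + B3.card) := by
    have u1 := Finset.card_le_card hsplit
    have u2 := Finset.card_union_le Iw (B1 ∪ B2 ∪ B3)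
    have u3 := Finset.card_union_le (B1 ∪ B2) B3
    have u4 := Finset.card_union_le B1 B2
    have u5 : B1 ∪ B2 ∪ B3 = (B1 ∪ B2) ∪ B3 := by rw [Finset.union_assoc]
    rw [← u5] at u3
    omega
  have t3 : (b - a).toNat * l ≤ 4 ^ K * ((n + 3 ^ K) / 6 ^ K + 1) * l :=
    Nat.mul_le_mul_right _ hdens
  omega

end counting
section measurepart

open scoped NNReal

/-- The set of sequences where `u` matches at position `i`. -/
def MtxSet (u : List ℕ) (i : ℕ) : Set (ℤ → ℕ) := {x | Mtx x u (i : ℤ)}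

lemma meas_MtxSet (u : List ℕ) (i : ℕ) : MeasurableSet (MtxSet u i) := by
  have h : MtxSet u i =
      ⋂ j : Fin u.length, (fun x : ℤ → ℕ => x (((j : ℕ) : ℤ) + (i : ℤ))) ⁻¹' {u.get j} := by
    ext x
    simp [MtxSet, Mtx, Set.mem_iInter]
  rw [h]
  exact MeasurableSet.iInter fun j => measurable_pi_apply _ MeasurableSet.of_discrete

lemma meas_cylX (u : List ℕ) : MeasurableSet (cylX u) := by
  have h : cylX u =
      ⋂ j : Fin u.length, (fun x : ℤ → ℕ => x ((j : ℕ) : ℤ)) ⁻¹' {u.get j} := by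
    ext x
    simp [cylX, Set.mem_iInter]
  rw [h]
  exact MeasurableSet.iInter fun j => measurable_pi_apply _ MeasurableSet.of_discrete

lemma shift_iter_apply (i : ℕ) (x : ℤ → ℕ) (n : ℤ) : shift^[i] x n = x (n + i) := by
  induction i generalizing x n with
  | zero => simp
  | succ i ih =>
    rw [Function.iterate_succ_apply, ih]
    show x (n + (i : ℤ) + 1) = x (n + (i + 1 : ℕ))
    congr 1
    push_cast
    ring

lemma preimage_iter_shift (u : List ℕ) (i : ℕ) : shift^[i] ⁻¹' cylX u = MtxSet u i := by
  ext x
  constructor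
  · intro h j
    have hh := h j
    rwa [shift_iter_apply] at hh
  · intro h j
    have hh := h j
    rw [shift_iter_apply]
    exact hh

/-- Sum-of-indicators version of the match count. -/
def Fsum (u : List ℕ) (nn : ℕ) (x : ℤ → ℕ) : ℝ≥0∞ :=
  ∑ i ∈ Finset.range nn, (MtxSet u i).indicator 1 x

lemma Fsum_meas (u : List ℕ) (nn : ℕ) : Measurable (Fsum u nn) :=
  Finset.measurable_sum _ fun i _ => measurable_one.indicator (meas_MtxSet u i)

lemma Fsum_eq (u : List ℕ) (nn : ℕ) (x : ℤ → ℕ) :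
    Fsum u nn x = (mcount x u nn : ℝ≥0∞) := by
  unfold Fsum mcount
  rw [Finset.card_filter]
  push_cast
  apply Finset.sum_congr rfl
  intro i _
  by_cases h : Mtx x u (i : ℤ)
  · simp [Set.indicator, MtxSet, h]
  · simp [Set.indicator, MtxSet, h]

lemma Fsum_int {μ : Measure (ℤ → ℕ)} (hinv : MeasurePreserving shift μ μ)
    (u : List ℕ) (nn : ℕ) :
    ∫⁻ x, Fsum u nn x ∂μ = nn * μ (cylX u) := by
  unfold Fsum
  rw [lintegral_finset_sum _ (fun i _ => measurable_one.indicator (meas_MtxSet u i))]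
  have h : ∀ i : ℕ, ∫⁻ x, (MtxSet u i).indicator 1 x ∂μ = μ (cylX u) := by
    intro i
    rw [lintegral_indicator_one (meas_MtxSet u i), ← preimage_iter_shift]
    exact (hinv.iterate i).measure_preimage (meas_cylX u).nullMeasurableSet
  simp only [h, Finset.sum_const, Finset.card_range, nsmul_eq_mul]

lemma half (τ : ℕ → Bool) (μ : Measure (ℤ → ℕ))
    (hμ : IsProbabilityMeasure μ) (hsupp : μ (Xset τ) = 1)
    (hinv : MeasurePreserving shift μ μ)
    (w : List ℕ) (hl : w.length ≠ 0) :
    μ (cylX w) ≤ μ (cylX w.reverse) := by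
  apply ENNReal.le_of_forall_pos_le_add
  intro ε hε _
  set l := w.length with hldef
  set ε2 : ℝ≥0 := ε / 2 with hε2
  have hε2pos : 0 < ε2 := by rw [hε2]; positivity
  have hε2ne : (ε2 : ℝ≥0∞) ≠ 0 := by exact_mod_cast hε2pos.ne'
  -- choose K
  obtain ⟨K, hK⟩ : ∃ K : ℕ, ((2 : ℝ≥0) / 3) ^ K < ε2 / ((l : ℝ≥0) + 1) := by
    apply exists_pow_lt_of_lt_one
    · positivity
    · rw [div_lt_one] <;> norm_num
  have hK6 : ((4 : ℝ≥0∞) ^ K * l) ≤ (ε2 : ℝ≥0∞) * 6 ^ K := by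
    have h1 : ((2 : ℝ≥0) / 3) ^ K * ((l : ℝ≥0) + 1) < ε2 :=
      (lt_div_iff₀ (by positivity)).mp hK
    have h2 : ((4 : ℝ≥0)) ^ K * (l : ℝ≥0) ≤ ε2 * 6 ^ K := by
      have e : ((4 : ℝ≥0)) ^ K = ((2 : ℝ≥0) / 3) ^ K * 6 ^ K := by
        rw [← mul_pow]
        congr 1
        field_simp
        norm_num
      rw [e]
      calc ((2 : ℝ≥0) / 3) ^ K * 6 ^ K * l = (((2 : ℝ≥0) / 3) ^ K * l) * 6 ^ K := by ring
        _ ≤ (((2 : ℝ≥0) / 3) ^ K * ((l : ℝ≥0) + 1)) * 6 ^ K := by gcongr <;> exact le_add_of_nonneg_right zero_le_one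
        _ ≤ ε2 * 6 ^ K := by gcongr
    have h3 := ENNReal.coe_le_coe.mpr h2
    push_cast at h3
    exact h3
  -- choose nn
  set c1 : ℕ := 2 * 3 ^ K + l + 2 * (4 ^ K * l) with hc1
  obtain ⟨m, hm⟩ := ENNReal.exists_nat_gt
    (show ((c1 : ℝ≥0∞) / (ε2 : ℝ≥0∞)) ≠ ⊤ from
      (ENNReal.div_lt_top (ENNReal.natCast_ne_top c1) hε2ne).ne)
  set nn := max m 1 with hnn
  have hnn1 : 1 ≤ nn := le_max_right m 1
  have hc1nn : (c1 : ℝ≥0∞) ≤ (ε2 : ℝ≥0∞) * nn := by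
    have h4 : (c1 : ℝ≥0∞) < m * ε2 :=
      (ENNReal.div_lt_iff (Or.inl hε2ne) (Or.inl ENNReal.coe_ne_top)).mp hm
    have h5 : (m : ℝ≥0∞) ≤ nn := by exact_mod_cast le_max_left m 1
    calc (c1 : ℝ≥0∞) ≤ m * ε2 := h4.le
      _ ≤ nn * ε2 := by gcongr
      _ = ε2 * nn := mul_comm _ _
  set Bd : ℕ := 2 * 3 ^ K + l + 4 ^ K * ((nn + 3 ^ K) / 6 ^ K + 1) * l with hBdd
  -- the good set
  set G : Set (ℤ → ℕ) := {x | Fsum w nn x ≤ Fsum w.reverse nn x + (Bd : ℝ≥0∞)} with hGdef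
  have hG : MeasurableSet G :=
    measurableSet_le (Fsum_meas _ _) ((Fsum_meas _ _).add measurable_const)
  have hsub : SmoothX ⊆ G := by
    intro x hx
    have hd := discrep hx w hl K nn
    show Fsum w nn x ≤ Fsum w.reverse nn x + (Bd : ℝ≥0∞)
    rw [Fsum_eq, Fsum_eq]
    have h6 : (mcount x w nn : ℝ≥0∞) ≤ ((mcount x w.reverse nn + Bd : ℕ) : ℝ≥0∞) := by
      exact_mod_cast hd
    rwa [Nat.cast_add] at h6
  have hXsub : Xset τ ⊆ SmoothX := fun y hy => hy.1
  have hmu1 : μ G = 1 := by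
    apply le_antisymm prob_le_one
    calc (1 : ℝ≥0∞) = μ (Xset τ) := hsupp.symm
      _ ≤ μ G := measure_mono (hXsub.trans hsub)
  have hae : ∀ᵐ x ∂μ, Fsum w nn x ≤ Fsum w.reverse nn x + (Bd : ℝ≥0∞) := by
    rw [ae_iff]
    have h7 : {x : ℤ → ℕ | ¬ (Fsum w nn x ≤ Fsum w.reverse nn x + (Bd : ℝ≥0∞))} = Gᶜ := by
      rw [hGdef, ← Set.compl_setOf]
    rw [h7, measure_compl hG (measure_ne_top μ G), hmu1, measure_univ]
    simp
  have hint : (nn : ℝ≥0∞) * μ (cylX w) ≤ (nn : ℝ≥0∞) * μ (cylX w.reverse) + Bd := by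
    rw [← Fsum_int hinv w nn, ← Fsum_int hinv w.reverse nn]
    calc ∫⁻ x, Fsum w nn x ∂μ ≤ ∫⁻ x, (Fsum w.reverse nn x + (Bd : ℝ≥0∞)) ∂μ :=
          lintegral_mono_ae hae
      _ = ∫⁻ x, Fsum w.reverse nn x ∂μ + (Bd : ℝ≥0∞) := by
          rw [lintegral_add_right _ measurable_const, lintegral_const, measure_univ, mul_one]
  -- bound Bd
  have hq : (nn + 3 ^ K) / 6 ^ K + 1 ≤ nn / 6 ^ K + 2 := by
    have h8 : (nn + 3 ^ K) / 6 ^ K ≤ (nn + 6 ^ K) / 6 ^ K :=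
      Nat.div_le_div_right (by
        have : 3 ^ K ≤ 6 ^ K := Nat.pow_le_pow_left (by norm_num) K
        omega)
    have h9 : (nn + 6 ^ K) / 6 ^ K = nn / 6 ^ K + 1 :=
      Nat.add_div_right _ (pow_pos (by norm_num) K)
    omega
  have hBd_nat : Bd ≤ c1 + 4 ^ K * (nn / 6 ^ K) * l := by
    have h10 : 4 ^ K * ((nn + 3 ^ K) / 6 ^ K + 1) * l ≤ 4 ^ K * (nn / 6 ^ K + 2) * l :=
      Nat.mul_le_mul_right _ (Nat.mul_le_mul_left _ hq)
    have e : 4 ^ K * (nn / 6 ^ K + 2) * l = 4 ^ K * (nn / 6 ^ K) * l + 2 * (4 ^ K * l) := by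
      ring
    rw [e] at h10
    omega
  have hsecond : ((4 ^ K * (nn / 6 ^ K) * l : ℕ) : ℝ≥0∞) ≤ (ε2 : ℝ≥0∞) * nn := by
    have hql : ((nn / 6 ^ K : ℕ) : ℝ≥0∞) * 6 ^ K ≤ (nn : ℝ≥0∞) := by
      have := Nat.div_mul_le_self nn (6 ^ K)
      exact_mod_cast this
    calc ((4 ^ K * (nn / 6 ^ K) * l : ℕ) : ℝ≥0∞)
        = ((4 : ℝ≥0∞) ^ K * l) * ((nn / 6 ^ K : ℕ) : ℝ≥0∞) := by push_cast; ring
      _ ≤ ((ε2 : ℝ≥0∞) * 6 ^ K) * ((nn / 6 ^ K : ℕ) : ℝ≥0∞) := by gcongr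
      _ = (ε2 : ℝ≥0∞) * (((nn / 6 ^ K : ℕ) : ℝ≥0∞) * 6 ^ K) := by ring
      _ ≤ (ε2 : ℝ≥0∞) * nn := by gcongr
  have hBd_le : (Bd : ℝ≥0∞) ≤ (ε2 : ℝ≥0∞) * nn + (ε2 : ℝ≥0∞) * nn := by
    calc (Bd : ℝ≥0∞) ≤ ((c1 + 4 ^ K * (nn / 6 ^ K) * l : ℕ) : ℝ≥0∞) := by
          exact_mod_cast hBd_nat
      _ = (c1 : ℝ≥0∞) + ((4 ^ K * (nn / 6 ^ K) * l : ℕ) : ℝ≥0∞) := by push_cast; ring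
      _ ≤ (ε2 : ℝ≥0∞) * nn + (ε2 : ℝ≥0∞) * nn := add_le_add hc1nn hsecond
  have hfinal : (nn : ℝ≥0∞) * μ (cylX w) ≤ (nn : ℝ≥0∞) * (μ (cylX w.reverse) + ε) := by
    have hee : (ε2 : ℝ≥0∞) + (ε2 : ℝ≥0∞) = (ε : ℝ≥0∞) := by
      rw [← ENNReal.coe_add]
      congr 1
      rw [hε2]
      exact add_halves ε
    calc (nn : ℝ≥0∞) * μ (cylX w) ≤ (nn : ℝ≥0∞) * μ (cylX w.reverse) + Bd := hint
      _ ≤ (nn : ℝ≥0∞) * μ (cylX w.reverse) + ((ε2 : ℝ≥0∞) * nn + (ε2 : ℝ≥0∞) * nn) :=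
          add_le_add_right hBd_le _
      _ = (nn : ℝ≥0∞) * μ (cylX w.reverse) + ((ε2 : ℝ≥0∞) + ε2) * nn := by ring
      _ = (nn : ℝ≥0∞) * (μ (cylX w.reverse) + ε) := by rw [hee]; ring
  exact (ENNReal.mul_le_mul_iff_right
    (by exact_mod_cast (by omega : nn ≠ 0)) (ENNReal.natCast_ne_top nn)).mp hfinal

end measurepart
/-- Reversal invariance of `μ_τ`.
For every `τ` and every finite word `w` over `{1,3}`, the unique `S`-invariant
probability measure on `X_τ` satisfies `μ_τ([reverse w]) = μ_τ([w])`. -/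
theorem stmt16 (τ : ℕ → Bool) (μ : Measure (ℤ → ℕ))
    (hμ : IsProbabilityMeasure μ) (hsupp : μ (Xset τ) = 1)
    (hinv : MeasurePreserving shift μ μ)
    (w : List ℕ) (hw : ∀ c ∈ w, c = 1 ∨ c = 3) :
    μ (cylX w.reverse) = μ (cylX w) := by
  rcases Nat.eq_zero_or_pos w.length with h0 | hpos
  · rw [List.length_eq_zero_iff] at h0
    subst h0
    rw [List.reverse_nil]
  · have hl : w.length ≠ 0 := by omega
    have h1 := half τ μ hμ hsupp hinv w hl
    have h2 := half τ μ hμ hsupp hinv w.reverse (by simpa using hl)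
    rw [List.reverse_reverse] at h2
    exact le_antisymm h2 h1
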